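/- Let T > 0, let L : [0, T] → [0, ∞) be measurable, let γ : [0, T] → [0, ∞) be integrable, and let μ : [0, ∞) → [0, ∞) be continuous and nondecreasing with μ(0) = 0 and μ(r) > 0 for r > 0. Let a > 0 and let Γ : [0, T] → ℝ satisfy Γ(t) ≥ a·t and ∫_{a·t}^{Γ(t)} ds/μ(s) = ∫₀^{t} γ(s) ds for every t ∈ [0, T]. Assume that s ↦ γ(s)·μ(L(s)) is integrable on [0, T] and that L(t) ≤ a·t + ∫₀^{t} γ(s)·μ(L(s)) ds for all t ∈ [0, T]. Then L(t) ≤ Γ(t) for all t ∈ [0, T]. -/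

import Mathlib

set_option maxHeartbeats 1000000

open MeasureTheory

theorem osgood_comparison (T : ℝ) (hT : 0 < T) (L γ μ Γ : ℝ → ℝ) (a : ℝ) (ha : 0 < a)
    (hLmeas : Measurable L) (hLnn : ∀ t ∈ Set.Icc 0 T, 0 ≤ L t)
    (hγnn : ∀ t ∈ Set.Icc 0 T, 0 ≤ γ t) (hγint : IntegrableOn γ (Set.Icc 0 T))
    (hμcont : ContinuousOn μ (Set.Ici 0)) (hμmono : MonotoneOn μ (Set.Ici 0))
    (hμ0 : μ 0 = 0) (hμpos : ∀ r > (0 : ℝ), 0 < μ r) (hμnn : ∀ r ≥ (0 : ℝ), 0 ≤ μ r)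
    (hΓ : ∀ t ∈ Set.Icc 0 T, a * t ≤ Γ t ∧
      ∫ s in (a * t)..(Γ t), (μ s)⁻¹ = ∫ s in (0 : ℝ)..t, γ s)
    (hint : IntegrableOn (fun s => γ s * μ (L s)) (Set.Icc 0 T))
    (hineq : ∀ t ∈ Set.Icc 0 T, L t ≤ a * t + ∫ s in (0 : ℝ)..t, γ s * μ (L s)) :
    ∀ t ∈ Set.Icc 0 T, L t ≤ Γ t := by
  set g : ℝ → ℝ := fun s => γ s * μ (L s) with hg_def
  set G : ℝ → ℝ := fun t => ∫ s in (0:ℝ)..t, γ s with hG_def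
  set F : ℝ → ℝ := fun t => a * t + ∫ s in (0:ℝ)..t, g s with hF_def
  -- basic integrability helpers
  have hsub : ∀ u v : ℝ, u ∈ Set.Icc 0 T → v ∈ Set.Icc 0 T → Set.uIcc u v ⊆ Set.Icc 0 T := by
    intro u v hu hv
    exact Set.uIcc_subset_Icc hu hv
  have hγiv : ∀ u v : ℝ, u ∈ Set.Icc 0 T → v ∈ Set.Icc 0 T → IntervalIntegrable γ volume u v := by
    intro u v hu hv
    exact (hγint.mono_set (hsub u v hu hv)).intervalIntegrable
  have hgiv : ∀ u v : ℝ, u ∈ Set.Icc 0 T → v ∈ Set.Icc 0 T → IntervalIntegrable g volume u v := by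
    intro u v hu hv
    exact (hint.mono_set (hsub u v hu hv)).intervalIntegrable
  have hgnn : ∀ s ∈ Set.Icc 0 T, 0 ≤ g s := by
    intro s hs
    exact mul_nonneg (hγnn s hs) (hμnn _ (hLnn s hs))
  -- inverse of μ integrability and bounds
  have hμposmono : ∀ u v : ℝ, 0 < u → u ≤ v → 0 < μ u ∧ μ u ≤ μ v := by
    intro u v hu huv
    exact ⟨hμpos u hu, hμmono (le_of_lt hu) (le_trans hu.le huv) huv⟩
  have hinv_int : ∀ u v : ℝ, 0 < u → u ≤ v →
      IntervalIntegrable (fun s => (μ s)⁻¹) volume u v := by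
    intro u v hu huv
    apply ContinuousOn.intervalIntegrable
    rw [Set.uIcc_of_le huv]
    apply ContinuousOn.inv₀
    · exact hμcont.mono (fun x hx => le_trans hu.le hx.1)
    · intro x hx
      exact ne_of_gt (hμpos x (lt_of_lt_of_le hu hx.1))
  have hinv_upper : ∀ u v : ℝ, 0 < u → u ≤ v →
      (∫ s in u..v, (μ s)⁻¹) ≤ (v - u) * (μ u)⁻¹ := by
    intro u v hu huv
    have h1 : (∫ s in u..v, (μ u)⁻¹) = (v - u) * (μ u)⁻¹ := by
      rw [intervalIntegral.integral_const, smul_eq_mul]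
    rw [← h1]
    apply intervalIntegral.integral_mono_on huv (hinv_int u v hu huv)
      intervalIntegrable_const
    intro x hx
    have := hμposmono u x hu hx.1
    exact inv_anti₀ this.1 this.2
  have hinv_lower : ∀ u v : ℝ, 0 < u → u ≤ v →
      (v - u) * (μ v)⁻¹ ≤ ∫ s in u..v, (μ s)⁻¹ := by
    intro u v hu huv
    have h1 : (∫ s in u..v, (μ v)⁻¹) = (v - u) * (μ v)⁻¹ := by
      rw [intervalIntegral.integral_const, smul_eq_mul]
    rw [← h1]
    apply intervalIntegral.integral_mono_on huv intervalIntegrable_const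
      (hinv_int u v hu huv)
    intro x hx
    have hx0 : 0 < x := lt_of_lt_of_le hu hx.1
    have := hμposmono x v hx0 hx.2
    exact inv_anti₀ (hμpos x hx0) this.2
  have hinv_nonneg : ∀ u v : ℝ, 0 < u → u ≤ v → 0 ≤ ∫ s in u..v, (μ s)⁻¹ := by
    intro u v hu huv
    apply intervalIntegral.integral_nonneg huv
    intro x hx
    exact inv_nonneg.mpr (hμnn x (le_trans hu.le hx.1))
  -- F basic facts
  have hFadd : ∀ u v : ℝ, u ∈ Set.Icc 0 T → v ∈ Set.Icc 0 T →
      F v = F u + a * (v - u) + ∫ s in u..v, g s := by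
    intro u v hu hv
    have h0u : IntervalIntegrable g volume 0 u := hgiv 0 u (Set.left_mem_Icc.mpr hT.le) hu
    have huv : IntervalIntegrable g volume u v := hgiv u v hu hv
    have := intervalIntegral.integral_add_adjacent_intervals h0u huv
    simp only [hF_def]
    rw [← this]
    ring
  have hGadd : ∀ u v : ℝ, u ∈ Set.Icc 0 T → v ∈ Set.Icc 0 T →
      G v = G u + ∫ s in u..v, γ s := by
    intro u v hu hv
    have h0u : IntervalIntegrable γ volume 0 u := hγiv 0 u (Set.left_mem_Icc.mpr hT.le) hu
    have huv : IntervalIntegrable γ volume u v := hγiv u v hu hv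
    have := intervalIntegral.integral_add_adjacent_intervals h0u huv
    simp only [hG_def]
    rw [← this]
  have hFmono : ∀ u v : ℝ, u ∈ Set.Icc 0 T → v ∈ Set.Icc 0 T → u ≤ v → F u ≤ F v := by
    intro u v hu hv huv
    rw [hFadd u v hu hv]
    have h1 : 0 ≤ ∫ s in u..v, g s := by
      apply intervalIntegral.integral_nonneg huv
      intro x hx
      exact hgnn x ⟨le_trans hu.1 hx.1, le_trans hx.2 hv.2⟩
    nlinarith [mul_nonneg ha.le (sub_nonneg.mpr huv)]
  have hFge : ∀ s ∈ Set.Icc 0 T, a * s ≤ F s := by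
    intro s hs
    have h1 : 0 ≤ ∫ x in (0:ℝ)..s, g x := by
      apply intervalIntegral.integral_nonneg hs.1
      intro x hx
      exact hgnn x ⟨hx.1, le_trans hx.2 hs.2⟩
    simp only [hF_def]
    linarith
  have hLF : ∀ s ∈ Set.Icc 0 T, L s ≤ F s := hineq
  have hF0 : F 0 = 0 := by simp [hF_def]
  have hG0 : G 0 = 0 := by simp [hG_def]
  -- continuity of F on Icc 0 T
  have hFcont : ContinuousOn F (Set.Icc 0 T) := by
    apply ContinuousOn.add
    · exact (continuous_const.mul continuous_id).continuousOn
    · have h1 := intervalIntegral.continuousOn_primitive_interval (a := (0:ℝ)) (b := T)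
        (μ := volume) (f := g) (by rwa [Set.uIcc_of_le hT.le])
      rwa [Set.uIcc_of_le hT.le] at h1
  have hGrfl : ∀ s : ℝ, G s = ∫ x in (0:ℝ)..s, γ x := fun _ => rfl
  clear_value g G F
  -- main claim
  intro t ht
  rcases eq_or_lt_of_le ht.1 with h0 | h0
  · -- t = 0
    have h1 := hineq 0 (Set.left_mem_Icc.mpr hT.le)
    have h2 := (hΓ 0 (Set.left_mem_Icc.mpr hT.le)).1
    simp only [mul_zero, intervalIntegral.integral_same, add_zero, zero_add] at h1 h2
    rw [← h0]
    linarith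
  -- t > 0
  suffices hFΓ : F t ≤ Γ t by exact le_trans (hLF t ht) hFΓ
  by_contra hcon
  push_neg at hcon
  have hab := (hΓ t ht).1
  have hΓeq := (hΓ t ht).2
  have hat : 0 < a * t := mul_pos ha h0
  have hbpos : 0 < Γ t := lt_of_lt_of_le hat hab
  have hcpos : 0 < F t := lt_trans hbpos hcon
  have hμat : 0 < μ (a * t) := hμpos _ hat
  have hμc : 0 < μ (F t) := hμpos _ hcpos
  -- key claim : for every ε > 0 the shifted integral is at most G t
  have key : ∀ ε : ℝ, 0 < ε → (∫ s in (ε + a * t)..(ε + F t), (μ s)⁻¹) ≤ G t := by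
    intro ε hε
    have hμε : 0 < μ ε := hμpos ε hε
    apply le_of_forall_pos_le_add
    intro η hη
    -- uniform continuity of F
    have hUC := (isCompact_Icc :
      IsCompact (Set.Icc (0:ℝ) T)).uniformContinuousOn_of_continuous hFcont
    rw [Metric.uniformContinuousOn_iff] at hUC
    obtain ⟨δ, hδ, hδF⟩ := hUC ε hε
    obtain ⟨n, hn⟩ := exists_nat_gt (max (t / δ) (a * t * (μ ε)⁻¹ / η))
    have hn1 : t / δ < n := lt_of_le_of_lt (le_max_left _ _) hn
    have hn2 : a * t * (μ ε)⁻¹ / η < n := lt_of_le_of_lt (le_max_right _ _) hn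
    have hnpos : 0 < (n : ℝ) := lt_of_le_of_lt (div_nonneg h0.le hδ.le) hn1
    set Δ := t / n with hΔ_def
    have hΔpos : 0 < Δ := div_pos h0 hnpos
    have hΔδ : Δ < δ := by
      rw [hΔ_def, div_lt_iff₀ hnpos]
      rw [div_lt_iff₀ hδ] at hn1
      nlinarith
    have hnt : (n : ℝ) * Δ = t := by
      rw [hΔ_def]
      field_simp
    -- the inductive step
    have step : ∀ u v : ℝ, u ∈ Set.Icc 0 T → v ∈ Set.Icc 0 T → v = u + Δ →
        ((∫ s in (ε + a * u)..(ε + F u), (μ s)⁻¹) ≤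
          G u + a * Δ * ((μ ε)⁻¹ - (μ (ε + a * u))⁻¹)) →
        (∫ s in (ε + a * v)..(ε + F v), (μ s)⁻¹) ≤
          G v + a * Δ * ((μ ε)⁻¹ - (μ (ε + a * v))⁻¹) := by
      intro u v hu hv hvu ih
      have huv : u ≤ v := by rw [hvu]; linarith
      have hau : 0 ≤ a * u := mul_nonneg ha.le hu.1
      have hav : 0 ≤ a * v := mul_nonneg ha.le hv.1
      have hauv : a * u ≤ a * v := mul_le_mul_of_nonneg_left huv ha.le
      have hA1pos : 0 < ε + a * u := by linarith
      have hA2pos : 0 < ε + a * v := by linarith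
      have hA1A2 : ε + a * u ≤ ε + a * v := by linarith
      have hA1B1 : ε + a * u ≤ ε + F u := by linarith [hFge u hu]
      have hB1B2 : ε + F u ≤ ε + F v := by linarith [hFmono u v hu hv huv]
      have hA2B2 : ε + a * v ≤ ε + F v := by linarith [hFge v hv]
      have hB1pos : 0 < ε + F u := lt_of_lt_of_le hA1pos hA1B1
      -- mesh condition : F v ≤ ε + F u
      have hmesh : F v ≤ ε + F u := by
        have hd : dist v u < δ := by
          rw [Real.dist_eq, hvu]
          rw [abs_of_nonneg (by linarith : (0:ℝ) ≤ u + Δ - u)]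
          simpa using hΔδ
        have := hδF v hv u hu hd
        rw [Real.dist_eq] at this
        have := le_of_lt (lt_of_le_of_lt (le_abs_self _) this)
        linarith
      -- splitting of the integrals
      have i1 := hinv_int _ _ hA1pos hA1A2
      have i2 := hinv_int _ _ hA1pos hA1B1
      have i3 := hinv_int _ _ hB1pos hB1B2
      have i4 := hinv_int _ _ hA2pos hA2B2
      have eq1 := intervalIntegral.integral_add_adjacent_intervals i1 i4
      have eq2 := intervalIntegral.integral_add_adjacent_intervals i2 i3
      -- bounds
      have bound1 := hinv_upper _ _ hB1pos hB1B2
      have hFv_eq : F v = F u + a * Δ + ∫ s in u..v, g s := by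
        rw [hFadd u v hu hv, hvu]
        ring_nf
      have bound_g : (∫ s in u..v, g s) ≤ μ (ε + F u) * ∫ s in u..v, γ s := by
        have hrhs : (μ (ε + F u)) * ∫ s in u..v, γ s
            = ∫ s in u..v, μ (ε + F u) * γ s := by
          rw [intervalIntegral.integral_const_mul]
        rw [hrhs]
        apply intervalIntegral.integral_mono_on huv (hgiv u v hu hv)
          ((hγiv u v hu hv).const_mul _)
        intro x hx
        have hxT : x ∈ Set.Icc 0 T := ⟨le_trans hu.1 hx.1, le_trans hx.2 hv.2⟩
        have hLx : L x ≤ ε + F u := by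
          calc L x ≤ F x := hLF x hxT
          _ ≤ F v := hFmono x v hxT hv hx.2
          _ ≤ ε + F u := hmesh
        have hμLx : μ (L x) ≤ μ (ε + F u) :=
          hμmono (hLnn x hxT) (le_trans (hLnn x hxT) hLx) hLx
        calc g x = γ x * μ (L x) := by rw [hg_def]
        _ ≤ γ x * μ (ε + F u) := mul_le_mul_of_nonneg_left hμLx (hγnn x hxT)
        _ = μ (ε + F u) * γ x := by ring
      have hμB1 : 0 < μ (ε + F u) := hμpos _ hB1pos
      have bound2 : (∫ s in u..v, g s) * (μ (ε + F u))⁻¹ ≤ ∫ s in u..v, γ s := by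
        rw [← mul_le_mul_iff_of_pos_right hμB1]
        calc (∫ s in u..v, g s) * (μ (ε + F u))⁻¹ * μ (ε + F u)
            = ∫ s in u..v, g s := by field_simp
        _ ≤ μ (ε + F u) * ∫ s in u..v, γ s := bound_g
        _ = (∫ s in u..v, γ s) * μ (ε + F u) := by ring
      have bound3 : (μ (ε + F u))⁻¹ ≤ (μ (ε + a * u))⁻¹ :=
        inv_anti₀ (hμpos _ hA1pos) (hμmono hA1pos.le hB1pos.le hA1B1)
      have bound4 : a * Δ * (μ (ε + a * v))⁻¹ ≤ ∫ s in (ε + a * u)..(ε + a * v), (μ s)⁻¹ := by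
        have h5 := hinv_lower _ _ hA1pos hA1A2
        have he : (ε + a * v) - (ε + a * u) = a * Δ := by rw [hvu]; ring
        rwa [he] at h5
      have hGv := hGadd u v hu hv
      have bound3' : a * Δ * (μ (ε + F u))⁻¹ ≤ a * Δ * (μ (ε + a * u))⁻¹ :=
        mul_le_mul_of_nonneg_left bound3 (by positivity)
      have hexp : (ε + F v - (ε + F u)) * (μ (ε + F u))⁻¹
          = a * Δ * (μ (ε + F u))⁻¹ + (∫ s in u..v, g s) * (μ (ε + F u))⁻¹ := by
        rw [hFv_eq]; ring
      rw [hexp] at bound1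
      linarith
    -- induction
    have main : ∀ i : ℕ, i ≤ n →
        (∫ s in (ε + a * ((i:ℝ) * Δ))..(ε + F ((i:ℝ) * Δ)), (μ s)⁻¹) ≤
          G ((i:ℝ) * Δ) + a * Δ * ((μ ε)⁻¹ - (μ (ε + a * ((i:ℝ) * Δ)))⁻¹) := by
      intro i
      induction i with
      | zero =>
        intro _
        simp only [Nat.cast_zero, zero_mul, mul_zero, add_zero, hF0, hG0]
        simp
      | succ k ihk =>
        intro hk1
        have hk : k ≤ n := Nat.le_of_succ_le hk1
        have hmem : ∀ j : ℕ, j ≤ n → (j:ℝ) * Δ ∈ Set.Icc 0 T := by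
          intro j hj
          constructor
          · positivity
          · have h1 : (j:ℝ) * Δ ≤ (n:ℝ) * Δ := by
              apply mul_le_mul_of_nonneg_right _ hΔpos.le
              exact_mod_cast hj
            rw [hnt] at h1
            exact le_trans h1 ht.2
        have hveq : ((k+1 : ℕ) : ℝ) * Δ = (k:ℝ) * Δ + Δ := by push_cast; ring
        rw [hveq]
        exact step ((k:ℝ) * Δ) ((k:ℝ) * Δ + Δ) (hmem k hk)
          (by rw [← hveq]; exact hmem (k+1) hk1) rfl (ihk hk)
    have hfin := main n le_rfl
    rw [hnt] at hfin
    have hinvA : (0:ℝ) ≤ (μ (ε + a * t))⁻¹ :=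
      inv_nonneg.mpr (hμnn _ (by positivity))
    have hlast : a * Δ * (μ ε)⁻¹ ≤ η := by
      have he : a * Δ * (μ ε)⁻¹ = a * t * (μ ε)⁻¹ / n := by rw [hΔ_def]; ring
      rw [he, div_le_iff₀ hnpos]
      rw [div_lt_iff₀ hη] at hn2
      nlinarith
    have hd : a * Δ * ((μ ε)⁻¹ - (μ (ε + a * t))⁻¹) ≤ η := by
      have h1 : 0 ≤ a * Δ := by positivity
      nlinarith
    linarith
  -- derive the contradiction
  obtain ⟨ε, hεpos, hε1, hε2⟩ : ∃ ε : ℝ, 0 < ε ∧ ε ≤ (F t - Γ t) / 2 ∧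
      ε ≤ μ (a * t) * (F t - Γ t) / (2 * μ (F t)) := by
    refine ⟨min ((F t - Γ t) / 2) (μ (a * t) * (F t - Γ t) / (2 * μ (F t))), ?_,
      min_le_left _ _, min_le_right _ _⟩
    apply lt_min
    · linarith
    · apply div_pos (mul_pos hμat (by linarith)) (by positivity)
  have hk := key ε hεpos
  have hεat_pos : 0 < ε + a * t := by linarith
  have hεatc : ε + a * t ≤ F t := by linarith
  have s1 := intervalIntegral.integral_add_adjacent_intervals
    (hinv_int _ _ hεat_pos hεatc) (hinv_int _ _ hcpos (by linarith : F t ≤ ε + F t))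
  have s1nn := hinv_nonneg _ _ hcpos (by linarith : F t ≤ ε + F t)
  have s2 := intervalIntegral.integral_add_adjacent_intervals
    (hinv_int _ _ hat (by linarith : a * t ≤ ε + a * t)) (hinv_int _ _ hεat_pos hεatc)
  have s3 := intervalIntegral.integral_add_adjacent_intervals
    (hinv_int _ _ hat hab) (hinv_int _ _ hbpos hcon.le)
  have ub := hinv_upper _ _ hat (by linarith : a * t ≤ ε + a * t)
  have ub' : (∫ s in (a * t)..(ε + a * t), (μ s)⁻¹) ≤ ε * (μ (a * t))⁻¹ := by
    have he : (ε + a * t) - a * t = ε := by ring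
    rwa [he] at ub
  have lb := hinv_lower _ _ hbpos hcon.le
  have hGt : (∫ s in (a * t)..(Γ t), (μ s)⁻¹) = G t := by rw [hGrfl t]; exact hΓeq
  have hfinal : (F t - Γ t) * (μ (F t))⁻¹ ≤ ε * (μ (a * t))⁻¹ := by linarith
  have hc1 : ε * (μ (a * t))⁻¹ ≤ μ (a * t) * (F t - Γ t) / (2 * μ (F t)) * (μ (a * t))⁻¹ :=
    mul_le_mul_of_nonneg_right hε2 (inv_nonneg.mpr hμat.le)
  have hc2 : μ (a * t) * (F t - Γ t) / (2 * μ (F t)) * (μ (a * t))⁻¹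
      = (F t - Γ t) * (μ (F t))⁻¹ / 2 := by
    field_simp
  have hc3 : 0 < (F t - Γ t) * (μ (F t))⁻¹ :=
    mul_pos (by linarith) (inv_pos.mpr hμc)
  rw [hc2] at hc1
  linarith
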